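/- Let X be a connected 3-valent Cayley graph on a finite abelian group. Then X is 2-spanning cyclable if and only if X is isomorphic to the 3-dimensional cube Q_3 or to the Cartesian product K_2 □ C_n for some n ≥ 4. -/

import Mathlib

set_option linter.unusedSectionVars false
open SimpleGraph

/-- `H` is a 2-factor of `X`: a spanning subgraph of `X` (on the same vertex set)
in which every vertex has valency 2. -/
def IsTwoFactor {V : Type*} (X H : SimpleGraph V) : Prop :=
  H ≤ X ∧ ∀ v : V, (H.neighborSet v).ncard = 2

/-- The 2-factor `H` separates the vertex set `A`: every connected component (cycle)
of `H` contains exactly one vertex of `A`; in particular `H` consists of exactly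
`A.card` cycles, each containing exactly one vertex of `A`. -/
def SeparatesSet {V : Type*} (H : SimpleGraph V) (A : Finset V) : Prop :=
  ∀ C : H.ConnectedComponent, ∃! a : V, a ∈ A ∧ H.connectedComponentMk a = C

/-- A graph `X` is `k`-spanning cyclable if for every set `A` of `k` distinct vertices
there is a 2-factor of `X` consisting of `k` cycles such that each vertex of `A`
belongs to a distinct cycle. -/
def SpanningCyclable {V : Type*} (X : SimpleGraph V) (k : ℕ) : Prop :=
  ∀ A : Finset V, A.card = k → ∃ H : SimpleGraph V, IsTwoFactor X H ∧ SeparatesSet H A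

/-- The cycle `C_n` on vertex set `ZMod n`: `x` and `y` are adjacent iff `x - y ∈ {1, -1}`. -/
def cycleZMod (n : ℕ) : SimpleGraph (ZMod n) :=
  SimpleGraph.circulantGraph ({1, -1} : Set (ZMod n))

/-- The pseudo-Cartesian product `C_m □_ℓ C_n`: start with `P_m □ C_n` (columns indexed by
`Fin m`, rows by `ZMod n`) and add the edges from `u_{m-1,j}` to `u_{0,j+ℓ}`.
When `ℓ = 0` this is the Cartesian product `C_m □ C_n`. -/
def pseudoProd (m n : ℕ) (l : ZMod n) : SimpleGraph (Fin m × ZMod n) :=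
  SimpleGraph.fromRel (fun u v =>
    (u.1 = v.1 ∧ v.2 = u.2 + 1) ∨
    ((u.1 : ℕ) + 1 = (v.1 : ℕ) ∧ u.2 = v.2) ∨
    ((u.1 : ℕ) = m - 1 ∧ (v.1 : ℕ) = 0 ∧ v.2 = u.2 + l))

/-- The Cayley graph of an (additive) group `G` with connection set `S`:
`x` and `y` are adjacent iff `x - y ∈ S`. -/
def cayleyGraph {G : Type*} [AddGroup G] (S : Finset G) : SimpleGraph G :=
  SimpleGraph.fromRel (fun x y => x - y ∈ S)

/-- The `n`-dimensional hypercube graph `Q_n`: two vertices are adjacent iff they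
differ in exactly one coordinate. -/
def hypercube (n : ℕ) : SimpleGraph (Fin n → Bool) :=
  SimpleGraph.fromRel (fun x y => ∃ i, x i ≠ y i ∧ ∀ j, j ≠ i → x j = y j)

/-! ### Generic helpers -/

section Generic

variable {V : Type*} {W : Type*}

lemma walk_invariant {X : SimpleGraph V} {α : Sort*} (f : V → α)
    (hf : ∀ u v, X.Adj u v → f u = f v) {u v : V} (h : X.Reachable u v) : f u = f v := by
  obtain ⟨w⟩ := h
  induction w with
  | nil => rfl
  | cons h p ih => exact (hf _ _ h).trans ih

lemma sep_not_reachable [DecidableEq V] {H : SimpleGraph V} {u v : V} (hne : u ≠ v)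
    (h : SeparatesSet H {u, v}) : ¬ H.Reachable u v := by
  intro hr
  obtain ⟨x, -, hx⟩ := h (H.connectedComponentMk u)
  have h1 := hx u ⟨by simp, rfl⟩
  have h2 := hx v ⟨by simp, (SimpleGraph.ConnectedComponent.sound hr.symm)⟩
  exact hne (h1.trans h2.symm)

lemma two_of_three {s : Set V} {x y z : V} (hsub : s ⊆ {x, y, z}) (hcard : s.ncard = 2)
    (hyz : y ≠ z) (hx : x ∉ s) : y ∈ s ∧ z ∈ s := by
  have h1 : s ⊆ {y, z} := by
    intro w hw
    rcases hsub hw with h | h | h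
    · exact absurd (h ▸ hw) hx
    · exact Or.inl h
    · exact Or.inr h
  have h2 : s = {y, z} := by
    apply Set.eq_of_subset_of_ncard_le h1 _ (Set.toFinite _)
    rw [hcard, Set.ncard_pair hyz]
  rw [h2]
  exact ⟨by simp, by simp⟩

lemma spanningCyclable_of_iso [DecidableEq W] {X : SimpleGraph V} {Y : SimpleGraph W} (e : X ≃g Y) {k : ℕ}
    (h : SpanningCyclable Y k) : SpanningCyclable X k := by
  intro A hA
  obtain ⟨H', ⟨hle, hdeg⟩, hsep⟩ := h (A.image e)
    (by rw [Finset.card_image_of_injective _ e.injective, hA])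
  refine ⟨SimpleGraph.comap e H', ⟨?_, ?_⟩, ?_⟩
  · intro u v huv
    exact e.map_adj_iff.mp (hle huv)
  · intro v
    have himg : H'.neighborSet (e v) = ⇑e '' ((SimpleGraph.comap (⇑e) H').neighborSet v) := by
      ext w
      constructor
      · intro hw
        refine ⟨e.symm w, ?_, by simp⟩
        show H'.Adj (e v) (e (e.symm w))
        simpa using hw
      · rintro ⟨u, hu, rfl⟩
        exact hu
    have := hdeg (e v)
    rwa [himg, Set.ncard_image_of_injective _ e.injective] at this
  · intro C
    -- component of the comap graph
    have key : ∀ u v : V, (SimpleGraph.comap (⇑e) H').Reachable u v ↔ H'.Reachable (e u) (e v) := by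
      intro u v
      let eH : (SimpleGraph.comap (⇑e) H') ≃g H' := ⟨e.toEquiv, Iff.rfl⟩
      exact (SimpleGraph.Iso.reachable_iff (φ := eH)).symm
    obtain ⟨w, hw⟩ := C.exists_rep
    obtain ⟨a', ⟨ha'A, ha'C⟩, huniq⟩ := hsep (H'.connectedComponentMk (e w))
    obtain ⟨a, haA, rfl⟩ := Finset.mem_image.mp ha'A
    refine ⟨a, ⟨haA, ?_⟩, ?_⟩
    · rw [← hw]
      exact SimpleGraph.ConnectedComponent.sound ((key a w).mpr
        (SimpleGraph.ConnectedComponent.exact ha'C))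
    · rintro b ⟨hbA, hbC⟩
      have hb' : H'.connectedComponentMk (e b) = H'.connectedComponentMk (e w) := by
        apply SimpleGraph.ConnectedComponent.sound
        rw [← key]
        apply SimpleGraph.ConnectedComponent.exact
        rw [hbC, ← hw]
        rfl
      have := huniq (e b) ⟨Finset.mem_image_of_mem _ hbA, hb'⟩
      exact e.injective this

end Generic
/-! ### Cayley graph helpers -/

section Cayley

variable {G : Type*} [AddCommGroup G] [Fintype G] [DecidableEq G]

lemma cay_adj {S : Finset G} (hsymm : ∀ s ∈ S, -s ∈ S) {x y : G} :
    (cayleyGraph S).Adj x y ↔ x ≠ y ∧ x - y ∈ S := by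
  rw [cayleyGraph, SimpleGraph.fromRel_adj]
  constructor
  · rintro ⟨hne, h | h⟩
    · exact ⟨hne, h⟩
    · refine ⟨hne, ?_⟩
      have := hsymm _ h
      rwa [neg_sub] at this
  · rintro ⟨hne, h⟩
    exact ⟨hne, Or.inl h⟩

lemma reach_mem_closure {S : Finset G} {x y : G}
    (h : (cayleyGraph S).Reachable x y) : y - x ∈ AddSubgroup.closure (S : Set G) := by
  obtain ⟨w⟩ := h
  induction w with
  | nil => simpa using AddSubgroup.zero_mem _
  | @cons u v z h p ih =>
    have hd : v - u ∈ AddSubgroup.closure (S : Set G) := by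
      rw [cayleyGraph, SimpleGraph.fromRel_adj] at h
      rcases h.2 with h' | h'
      · have h2 : (u - v) ∈ AddSubgroup.closure (S : Set G) := AddSubgroup.subset_closure h'
        have hneg := AddSubgroup.neg_mem _ h2
        rwa [neg_sub] at hneg
      · exact AddSubgroup.subset_closure h'
    have h3 : z - u = (z - v) + (v - u) := by abel
    rw [h3]
    exact AddSubgroup.add_mem _ ih hd

lemma closure_eq_top {S : Finset G} (hconn : (cayleyGraph S).Connected) :
    AddSubgroup.closure (S : Set G) = ⊤ := by
  rw [eq_top_iff]
  intro g _
  have := reach_mem_closure (hconn.preconnected 0 g)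
  simpa using this

lemma exists_nsmul_of_mem_zmultiples {a g : G} (h : g ∈ AddSubgroup.zmultiples a) :
    ∃ t : ℕ, t • a = g := by
  obtain ⟨k, hk⟩ := h
  simp only at hk
  have hN : 0 < addOrderOf a := addOrderOf_pos a
  set N := addOrderOf a with hNdef
  refine ⟨(k % (N : ℤ)).toNat, ?_⟩
  have hnn : 0 ≤ k % (N : ℤ) := Int.emod_nonneg k (by exact_mod_cast hN.ne')
  have h1 : ((k % (N : ℤ)).toNat : ℤ) • a = (k % (N : ℤ)) • a := by
    rw [Int.toNat_of_nonneg hnn]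
  have h2 : (k % (N : ℤ)) • a = k • a := by
    have : k = (N : ℤ) * (k / N) + k % N := (Int.mul_ediv_add_emod k N).symm
    calc (k % (N : ℤ)) • a = ((N : ℤ) * (k / N)) • a + (k % (N : ℤ)) • a := by
          rw [mul_comm, mul_zsmul, natCast_zsmul, addOrderOf_nsmul_eq_zero, smul_zero, zero_add]
        _ = k • a := by rw [← add_zsmul, ← this]
  rw [← hk, ← h2, ← h1, natCast_zsmul]

/-! ### The one-involution ("pair") case: negative results -/

variable {S : Finset G} {a b : G}

lemma nbr_subset (hsymm : ∀ s ∈ S, -s ∈ S) (hS : (S : Set G) = {a, -a, b})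
    (hb2 : b + b = 0) {H : SimpleGraph G} (hle : H ≤ cayleyGraph S) (v : G) :
    H.neighborSet v ⊆ {v + a, v + -a, v + b} := by
  intro w hw
  have hadj := hle hw
  rw [cay_adj hsymm] at hadj
  have hm : v - w ∈ ({a, -a, b} : Set G) := by rw [← hS]; exact_mod_cast hadj.2
  have hw' : w = v - (v - w) := by abel
  rcases hm with h | h | h
  · right; left; rw [hw', h]; abel
  · left; rw [hw', h]; abel
  · right; right
    rw [Set.mem_singleton_iff] at h
    have hnb : -b = b := by rw [neg_eq_iff_add_eq_zero, hb2]
    rw [Set.mem_singleton_iff, hw', h, sub_eq_add_neg, hnb]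

lemma forced_rails (hsymm : ∀ s ∈ S, -s ∈ S) (hS : (S : Set G) = {a, -a, b})
    (hb2 : b + b = 0) (ha2 : a + a ≠ 0) (hba : b ≠ a) (hba' : b ≠ -a)
    {H : SimpleGraph G} (hle : H ≤ cayleyGraph S)
    (hdeg : ∀ v, (H.neighborSet v).ncard = 2) (v : G)
    (hv : ¬ H.Adj v (v + b)) : H.Adj v (v + a) ∧ H.Adj v (v + -a) := by
  have hsub : H.neighborSet v ⊆ {v + b, v + a, v + -a} := by
    intro w hw
    rcases nbr_subset hsymm hS hb2 hle v hw with h | h | h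
    · right; left; exact h
    · right; right; exact h
    · left; exact h
  have := two_of_three hsub (hdeg v) (by
      intro h
      have h2 := add_left_cancel h
      rw [eq_neg_iff_add_eq_zero] at h2
      exact ha2 h2) (by
      intro h
      exact hv h)
  exact this

lemma reach_rail (hsymm : ∀ s ∈ S, -s ∈ S) (hS : (S : Set G) = {a, -a, b})
    (hb2 : b + b = 0) (ha2 : a + a ≠ 0) (hba : b ≠ a) (hba' : b ≠ -a)
    {H : SimpleGraph G} (hle : H ≤ cayleyGraph S)
    (hdeg : ∀ v, (H.neighborSet v).ncard = 2)
    (hnorung : ∀ w : G, ¬ H.Adj w (w + b)) (v : G) (t : ℕ) :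
    H.Reachable v (v + t • a) := by
  induction t with
  | zero =>
    rw [zero_nsmul, add_zero]
  | succ t ih =>
    refine ih.trans ?_
    have hadj := (forced_rails hsymm hS hb2 ha2 hba hba' hle hdeg (v + t • a)
      (hnorung _)).1
    have : v + t • a + a = v + (t + 1) • a := by rw [add_nsmul, one_nsmul]; abel
    rw [this] at hadj
    exact hadj.reachable

lemma reach_b_of_rung (hsymm : ∀ s ∈ S, -s ∈ S) (hS : (S : Set G) = {a, -a, b})
    (hb2 : b + b = 0) (ha2 : a + a ≠ 0) (hba : b ≠ a) (hba' : b ≠ -a)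
    {H : SimpleGraph G} (hle : H ≤ cayleyGraph S)
    (hdeg : ∀ v, (H.neighborSet v).ncard = 2)
    {w : G} (hw : H.Adj w (w + b)) (hgen : ∀ x : G, x ∈ AddSubgroup.zmultiples a)
    (v : G) : H.Reachable v (v + b) := by
  -- propagation step
  have step : ∀ u : G, ¬ H.Adj u (u + b) →
      (H.Reachable (u + a) (u + a + b) → H.Reachable u (u + b)) := by
    intro u hu hr
    have h1 := (forced_rails hsymm hS hb2 ha2 hba hba' hle hdeg u hu).1
    have hub : ¬ H.Adj (u + b) (u + b + b) := by
      intro hadj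
      apply hu
      have : u + b + b = u := by rw [add_assoc, hb2, add_zero]
      rw [this] at hadj
      exact hadj.symm
    have h2 := (forced_rails hsymm hS hb2 ha2 hba hba' hle hdeg (u + b) hub).1
    have heq : u + b + a = u + a + b := by abel
    rw [heq] at h2
    exact (h1.reachable.trans hr).trans h2.reachable.symm
  -- propagate from w backwards
  have main : ∀ t : ℕ, ∀ u : G, u + t • a = w → H.Reachable u (u + b) := by
    intro t
    induction t with
    | zero => intro u hu; simp at hu; subst hu; exact hw.reachable
    | succ t ih =>
      intro u hu
      by_cases hadj : H.Adj u (u + b)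
      · exact hadj.reachable
      · refine step u hadj (ih (u + a) ?_)
        rw [← hu, add_nsmul, one_nsmul]; abel
  obtain ⟨t, ht⟩ := exists_nsmul_of_mem_zmultiples (hgen (w - v))
  exact main t v (by rw [ht]; abel)

lemma pair_degenerate_not_sc
    (hsymm : ∀ s ∈ S, -s ∈ S) (hS : (S : Set G) = {a, -a, b})
    (hb2 : b + b = 0) (ha2 : a + a ≠ 0) (hba : b ≠ a) (hba' : b ≠ -a) (hb0 : b ≠ 0)
    (hclos : AddSubgroup.closure (S : Set G) = ⊤)
    (hmem : b ∈ AddSubgroup.zmultiples a) :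
    ¬ SpanningCyclable (cayleyGraph S) 2 := by
  intro hsc
  have hgen : ∀ x : G, x ∈ AddSubgroup.zmultiples a := by
    intro x
    have hx : x ∈ AddSubgroup.closure (S : Set G) := by rw [hclos]; trivial
    have hsub : AddSubgroup.closure (S : Set G) ≤ AddSubgroup.zmultiples a := by
      rw [AddSubgroup.closure_le, hS]
      rintro s (hs | hs | hs)
      · rw [hs]; exact AddSubgroup.mem_zmultiples a
      · rw [hs]; exact AddSubgroup.neg_mem _ (AddSubgroup.mem_zmultiples a)
      · rw [Set.mem_singleton_iff] at hs
        rw [hs]; exact hmem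
    exact hsub hx
  obtain ⟨H, ⟨hle, hdeg⟩, hsep⟩ := hsc {0, b} (Finset.card_pair (Ne.symm hb0))
  have hreach : H.Reachable 0 b := by
    by_cases hrung : ∃ w : G, H.Adj w (w + b)
    · obtain ⟨w, hw⟩ := hrung
      have := reach_b_of_rung hsymm hS hb2 ha2 hba hba' hle hdeg hw hgen 0
      simpa using this
    · push_neg at hrung
      obtain ⟨t, ht⟩ := exists_nsmul_of_mem_zmultiples hmem
      have := reach_rail hsymm hS hb2 ha2 hba hba' hle hdeg
        (by intro w hw; exact hrung w hw) 0 t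
      rwa [zero_add, ht] at this
  exact sep_not_reachable (Ne.symm hb0) hsep hreach

lemma prism3_not_sc
    (hsymm : ∀ s ∈ S, -s ∈ S) (hS : (S : Set G) = {a, -a, b})
    (hb2 : b + b = 0) (ha2 : a + a ≠ 0) (hba : b ≠ a) (hba' : b ≠ -a)
    (ha0 : a ≠ 0) (ha3 : a + a + a = 0) :
    ¬ SpanningCyclable (cayleyGraph S) 2 := by
  intro hsc
  obtain ⟨H, ⟨hle, hdeg⟩, hsep⟩ := hsc {0, a} (Finset.card_pair (Ne.symm ha0))
  have hreach : H.Reachable 0 a := by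
    by_cases hadj : H.Adj 0 a
    · exact hadj.reachable
    · -- neighbors of 0 are -a and b; neighbors of a are a+a=-a and a+b
      have h0 : H.Adj 0 (0 + -a) ∧ H.Adj 0 (0 + b) := by
        have hsub : H.neighborSet 0 ⊆ {0 + a, 0 + -a, 0 + b} :=
          nbr_subset hsymm hS hb2 hle 0
        refine two_of_three hsub (hdeg 0) ?_ ?_
        · intro h
          rw [add_left_cancel_iff] at h
          exact hba' h.symm
        · intro h
          have h2 : H.Adj 0 (0 + a) := h
          rw [zero_add] at h2
          exact hadj h2
      have ha' : H.Adj a (a + a) := by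
        have hsub : H.neighborSet a ⊆ {a + -a, a + a, a + b} := by
          intro w hw
          rcases nbr_subset hsymm hS hb2 hle a hw with h | h | h
          · right; left; exact h
          · left; exact h
          · right; right; exact h
        have := two_of_three hsub (hdeg a) (by
          intro h
          rw [add_left_cancel_iff] at h
          exact hba h.symm) (by
          intro h
          have h2 : H.Adj a (a + -a) := h
          have h3 : a + -a = 0 := by abel
          rw [h3] at h2
          exact hadj h2.symm)
        exact this.1
      have key : a + a = 0 + -a := by
        rw [zero_add, eq_comm, neg_eq_iff_add_eq_zero, ← add_assoc]
        exact ha3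
      rw [key] at ha'
      exact (h0.1.reachable).trans ha'.reachable.symm
  exact sep_not_reachable (Ne.symm ha0) hsep hreach

end Cayley
/-! ### Graphs on fewer than 6 vertices are not 2-spanning-cyclable -/

section Small

variable {V : Type*} [Fintype V] [DecidableEq V]

lemma not_sc_of_small (X : SimpleGraph V) {u v : V} (hne : u ≠ v)
    (hcard : Fintype.card V < 6) : ¬ SpanningCyclable X 2 := by
  intro hsc
  obtain ⟨H, ⟨hle, hdeg⟩, hsep⟩ := hsc {u, v} (Finset.card_pair hne)
  obtain ⟨x, y, hxy, hxyset⟩ := Set.ncard_eq_two.mp (hdeg u)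
  obtain ⟨x', y', hxy', hxyset'⟩ := Set.ncard_eq_two.mp (hdeg v)
  have hax : H.Adj u x := by
    have : x ∈ H.neighborSet u := by rw [hxyset]; exact Or.inl rfl
    exact this
  have hay : H.Adj u y := by
    have : y ∈ H.neighborSet u := by rw [hxyset]; exact Or.inr rfl
    exact this
  have hax' : H.Adj v x' := by
    have : x' ∈ H.neighborSet v := by rw [hxyset']; exact Or.inl rfl
    exact this
  have hay' : H.Adj v y' := by
    have : y' ∈ H.neighborSet v := by rw [hxyset']; exact Or.inr rfl
    exact this
  have hmkne : H.connectedComponentMk u ≠ H.connectedComponentMk v := by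
    intro h
    exact sep_not_reachable hne hsep (SimpleGraph.ConnectedComponent.exact h)
  set P : V → Prop := fun w => H.connectedComponentMk w = H.connectedComponentMk u with hP
  have hPu : P u := rfl
  have hPx : P x := (SimpleGraph.ConnectedComponent.sound hax.reachable).symm
  have hPy : P y := (SimpleGraph.ConnectedComponent.sound hay.reachable).symm
  have hPv : ¬ P v := fun h => hmkne h.symm
  have hPx' : ¬ P x' := fun h => hmkne ((SimpleGraph.ConnectedComponent.sound hax'.reachable).trans h).symm
  have hPy' : ¬ P y' := fun h => hmkne ((SimpleGraph.ConnectedComponent.sound hay'.reachable).trans h).symm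
  have hc1 : ({u, x, y} : Finset V).card = 3 :=
    Finset.card_eq_three.mpr ⟨u, x, y, hax.ne, hay.ne, hxy, rfl⟩
  have hc2 : ({v, x', y'} : Finset V).card = 3 :=
    Finset.card_eq_three.mpr ⟨v, x', y', hax'.ne, hay'.ne, hxy', rfl⟩
  have hdisj : Disjoint ({u, x, y} : Finset V) ({v, x', y'} : Finset V) := by
    rw [Finset.disjoint_left]
    intro w hw hw'
    have hPw : P w := by
      rcases Finset.mem_insert.mp hw with rfl | hw2
      · exact hPu
      · rcases Finset.mem_insert.mp hw2 with rfl | hw3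
        · exact hPx
        · rw [Finset.mem_singleton] at hw3; rw [hw3]; exact hPy
    rcases Finset.mem_insert.mp hw' with rfl | hw2
    · exact hPv hPw
    · rcases Finset.mem_insert.mp hw2 with rfl | hw3
      · exact hPx' hPw
      · rw [Finset.mem_singleton] at hw3; rw [← hw3] at hPy'; exact hPy' hPw
  have hunion := Finset.card_union_of_disjoint hdisj
  rw [hc1, hc2] at hunion
  have hle6 : 6 ≤ Fintype.card V := by
    calc 6 = (({u, x, y} : Finset V) ∪ ({v, x', y'} : Finset V)).card := hunion.symm
    _ ≤ Fintype.card V := Finset.card_le_univ _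
  omega

end Small

/-! ### The three-involutions case: the hypercube -/

section Inv

variable {G : Type*} [AddCommGroup G] [Fintype G] [DecidableEq G]

/-- the canonical map from the cube to `G` determined by three involutions -/
private def cubeMap (b : Fin 3 → G) (f : Fin 3 → Bool) : G :=
  ∑ i : Fin 3, if f i then b i else 0

lemma cubeMap_add (b : Fin 3 → G) (hinv : ∀ i, b i + b i = 0) (f g : Fin 3 → Bool) :
    cubeMap b f + cubeMap b g = cubeMap b (fun i => xor (f i) (g i)) := by
  rw [cubeMap, cubeMap, cubeMap, ← Finset.sum_add_distrib]
  apply Finset.sum_congr rfl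
  intro i _
  cases hf : f i <;> cases hg : g i <;> simp [hf, hg, hinv i]

lemma cubeMap_self (b : Fin 3 → G) (hinv : ∀ i, b i + b i = 0) (f : Fin 3 → Bool) :
    cubeMap b f + cubeMap b f = 0 := by
  rw [cubeMap_add b hinv]
  simp [cubeMap]

lemma cubeMap_neg (b : Fin 3 → G) (hinv : ∀ i, b i + b i = 0) (f : Fin 3 → Bool) :
    -(cubeMap b f) = cubeMap b f :=
  neg_eq_of_add_eq_zero_right (cubeMap_self b hinv f)

lemma cubeMap_delta (b : Fin 3 → G) (i : Fin 3) :
    cubeMap b (fun j => decide (j = i)) = b i := by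
  fin_cases i <;> simp [cubeMap, Fin.sum_univ_three]

lemma cubeMap_surj {S : Finset G} (b : Fin 3 → G) (hinv : ∀ i, b i + b i = 0)
    (hS : (S : Set G) = {b 0, b 1, b 2})
    (hclos : AddSubgroup.closure (S : Set G) = ⊤) :
    Function.Surjective (cubeMap b) := by
  intro g
  have hg : g ∈ AddSubgroup.closure (S : Set G) := by rw [hclos]; trivial
  induction hg using AddSubgroup.closure_induction with
  | mem s hs =>
    rw [hS] at hs
    rcases hs with hs | hs | hs
    · exact ⟨fun j => decide (j = 0), by rw [cubeMap_delta, hs]⟩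
    · exact ⟨fun j => decide (j = 1), by rw [cubeMap_delta, hs]⟩
    · rw [Set.mem_singleton_iff] at hs
      exact ⟨fun j => decide (j = 2), by rw [cubeMap_delta, hs]⟩
  | zero => exact ⟨fun _ => false, by simp [cubeMap]⟩
  | add x y hx hy ihx ihy =>
    obtain ⟨f, rfl⟩ := ihx
    obtain ⟨f', rfl⟩ := ihy
    exact ⟨_, (cubeMap_add b hinv f f').symm⟩
  | neg x hx ihx =>
    obtain ⟨f, rfl⟩ := ihx
    exact ⟨f, (cubeMap_neg b hinv f).symm⟩

lemma cubeMap_inj {S : Finset G} (b : Fin 3 → G) (hinv : ∀ i, b i + b i = 0)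
    (h0 : ∀ i, b i ≠ 0) (h01 : b 0 ≠ b 1) (h02 : b 0 ≠ b 2) (h12 : b 1 ≠ b 2)
    (hS : (S : Set G) = {b 0, b 1, b 2})
    (hclos : AddSubgroup.closure (S : Set G) = ⊤)
    (hcard6 : 6 ≤ Fintype.card G) :
    Function.Injective (cubeMap b) := by
  have hzero : ∀ h : Fin 3 → Bool, cubeMap b h = 0 → h = fun _ => false := by
    intro h hmap
    have hrel : ¬ (b 0 + b 1 + b 2 = 0) := by
      intro hrel
      -- G would have at most 4 elements
      have hb2 : b 2 = b 0 + b 1 := by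
        have h' : b 2 = -(b 0 + b 1) := by
          rw [eq_neg_iff_add_eq_zero, ← hrel]; abel
        rw [h', neg_add, neg_eq_of_add_eq_zero_right (hinv 0),
          neg_eq_of_add_eq_zero_right (hinv 1)]
      have ite_add_ite : ∀ (s t : Bool) (x : G), x + x = 0 →
          (if s then x else 0) + (if t then x else 0) = (if xor s t then x else 0) := by
        intro s t x hx
        cases s <;> cases t <;> simp_all
      have hsurj2 : Function.Surjective
          (fun st : Bool × Bool => (if st.1 then b 0 else 0) + (if st.2 then b 1 else 0)) := by
        intro g
        obtain ⟨f, rfl⟩ := cubeMap_surj b hinv hS hclos g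
        refine ⟨(xor (f 0) (f 2), xor (f 1) (f 2)), ?_⟩
        simp only
        rw [← ite_add_ite _ _ _ (hinv 0), ← ite_add_ite _ _ _ (hinv 1)]
        have hsplit : (if f 2 then b 2 else 0)
            = (if f 2 then b 0 else 0) + (if f 2 then b 1 else 0) := by
          cases hf2 : f 2 <;> simp [hb2]
        rw [cubeMap, Fin.sum_univ_three, hsplit]
        abel
      have := Fintype.card_le_of_surjective _ hsurj2
      simp at this
      omega
    -- now case bash on h
    have hmap' : (if h 0 then b 0 else 0) + (if h 1 then b 1 else 0)
        + (if h 2 then b 2 else 0) = 0 := by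
      rw [← Fin.sum_univ_three (fun i => if h i then b i else 0)]
      exact hmap
    funext i
    cases hh0 : h 0 <;> cases hh1 : h 1 <;> cases hh2 : h 2 <;>
        rw [hh0, hh1, hh2] at hmap' <;>
        simp only [if_true, if_false, Bool.false_eq_true, zero_add, add_zero,
          reduceIte] at hmap'
    · fin_cases i <;> simp [hh0, hh1, hh2]
    · exact absurd hmap' (h0 2)
    · exact absurd hmap' (h0 1)
    · exfalso
      have : b 1 = b 2 := by
        rw [← neg_eq_of_add_eq_zero_right (hinv 2), eq_neg_iff_add_eq_zero, hmap']
      exact h12 this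
    · exact absurd hmap' (h0 0)
    · exfalso
      have : b 0 = b 2 := by
        rw [← neg_eq_of_add_eq_zero_right (hinv 2), eq_neg_iff_add_eq_zero, hmap']
      exact h02 this
    · exfalso
      have : b 0 = b 1 := by
        rw [← neg_eq_of_add_eq_zero_right (hinv 1), eq_neg_iff_add_eq_zero, hmap']
      exact h01 this
    · exact absurd hmap' hrel
  intro f g hfg
  have : cubeMap b (fun i => xor (f i) (g i)) = 0 := by
    rw [← cubeMap_add b hinv, hfg, cubeMap_self b hinv]
  have hx := hzero _ this
  funext i
  have := congrFun hx i
  simpa using this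

lemma inv_case_iso {S : Finset G} (hsymm : ∀ s ∈ S, -s ∈ S) (b : Fin 3 → G)
    (hinv : ∀ i, b i + b i = 0)
    (h0 : ∀ i, b i ≠ 0) (h01 : b 0 ≠ b 1) (h02 : b 0 ≠ b 2) (h12 : b 1 ≠ b 2)
    (hS : (S : Set G) = {b 0, b 1, b 2})
    (hclos : AddSubgroup.closure (S : Set G) = ⊤)
    (hcard6 : 6 ≤ Fintype.card G) :
    Nonempty (cayleyGraph S ≃g hypercube 3) := by
  have hinj := cubeMap_inj b hinv h0 h01 h02 h12 hS hclos hcard6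
  have hsurj := cubeMap_surj b hinv hS hclos
  set e : (Fin 3 → Bool) ≃ G := Equiv.ofBijective (cubeMap b) ⟨hinj, hsurj⟩ with he
  have hadj : ∀ f g : Fin 3 → Bool,
      (cayleyGraph S).Adj (cubeMap b f) (cubeMap b g) ↔ (hypercube 3).Adj f g := by
    intro f g
    rw [cay_adj hsymm]
    have hdiff : cubeMap b f - cubeMap b g = cubeMap b (fun i => xor (f i) (g i)) := by
      rw [sub_eq_add_neg, cubeMap_neg b hinv, cubeMap_add b hinv]
    constructor
    · rintro ⟨hne, hmem⟩
      have hmem' : cubeMap b (fun i => xor (f i) (g i)) ∈ ({b 0, b 1, b 2} : Set G) := by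
        rw [← hS, ← hdiff]; exact_mod_cast hmem
      have hdelta : ∃ i : Fin 3, (fun j => xor (f j) (g j)) = (fun j => decide (j = i)) := by
        rcases hmem' with h | h | h
        · exact ⟨0, hinj (by rw [h, cubeMap_delta])⟩
        · exact ⟨1, hinj (by rw [h, cubeMap_delta])⟩
        · rw [Set.mem_singleton_iff] at h
          exact ⟨2, hinj (by rw [h, cubeMap_delta])⟩
      obtain ⟨i, hi⟩ := hdelta
      rw [hypercube, SimpleGraph.fromRel_adj]
      refine ⟨fun h => hne (by rw [h]), Or.inl ⟨i, ?_, ?_⟩⟩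
      · have := congrFun hi i
        simp at this
        intro hfi
        rw [hfi] at this
        simp at this
      · intro j hj
        have := congrFun hi j
        simp [hj] at this
        exact this
    · intro h
      rw [hypercube, SimpleGraph.fromRel_adj] at h
      obtain ⟨hne, h⟩ := h
      have hdelta : ∃ i : Fin 3, f i ≠ g i ∧ ∀ j, j ≠ i → f j = g j := by
        rcases h with h | h
        · exact h
        · obtain ⟨i, hi, hj⟩ := h
          exact ⟨i, hi.symm ∘ Eq.symm ∘ id ∘ Eq.symm, fun j hj' => (hj j hj').symm⟩
      obtain ⟨i, hi, hj⟩ := hdelta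
      have hxor : (fun j => xor (f j) (g j)) = (fun j => decide (j = i)) := by
        funext j
        by_cases hji : j = i
        · subst hji
          simp
          cases hfj : f j <;> cases hgj : g j <;> simp_all
        · simp [hji, hj j hji]
      constructor
      · intro heq
        exact hne (hinj heq)
      · have : cubeMap b f - cubeMap b g = b i := by
          rw [hdiff, hxor, cubeMap_delta]
        rw [this]
        have : b i ∈ (S : Set G) := by
          rw [hS]
          fin_cases i
          · exact Or.inl rfl
          · exact Or.inr (Or.inl rfl)
          · exact Or.inr (Or.inr rfl)
        exact_mod_cast this
  refine ⟨?_⟩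
  refine RelIso.mk e.symm ?_
  intro x y
  show (hypercube 3).Adj (e.symm x) (e.symm y) ↔ (cayleyGraph S).Adj x y
  rw [← hadj (e.symm x) (e.symm y)]
  have hx : cubeMap b (e.symm x) = x := e.apply_symm_apply x
  have hy : cubeMap b (e.symm y) = y := e.apply_symm_apply y
  rw [hx, hy]

end Inv
/-! ### The prism `K₂ □ C_n` is 2-spanning cyclable for `n ≥ 4` -/

section Prism

variable {n : ℕ}

lemma zmod_natCast_ne_zero (hk : 0 < n) {k : ℕ} (h0 : 0 < k) (hkn : k < n) :
    ((k : ℕ) : ZMod n) ≠ 0 := by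
  intro h
  rw [ZMod.natCast_eq_zero_iff] at h
  have := Nat.le_of_dvd h0 h
  omega

lemma cyc_adj {y z : ZMod n} :
    (cycleZMod n).Adj y z ↔ y ≠ z ∧ (y - z = 1 ∨ z - y = 1) := by
  rw [cycleZMod, SimpleGraph.circulantGraph, SimpleGraph.fromRel_adj]
  have hneg : ∀ w v : ZMod n, w - v = -1 ↔ v - w = 1 := by
    intro w v
    rw [← neg_sub v w, neg_eq_iff_eq_neg, eq_comm, neg_neg, eq_comm]
  constructor
  · rintro ⟨hne, h | h⟩
    · rcases h with h | h
      · exact ⟨hne, Or.inl h⟩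
      · rw [Set.mem_singleton_iff, hneg] at h
        exact ⟨hne, Or.inr h⟩
    · rcases h with h | h
      · exact ⟨hne, Or.inr h⟩
      · rw [Set.mem_singleton_iff, hneg] at h
        exact ⟨hne, Or.inl h⟩
  · rintro ⟨hne, h | h⟩
    · exact ⟨hne, Or.inl (Or.inl h)⟩
    · exact ⟨hne, Or.inr (Or.inl h)⟩

lemma prism_adj {u v : Fin 2 × ZMod n} :
    ((⊤ : SimpleGraph (Fin 2)) □ cycleZMod n).Adj u v ↔
      (u.1 ≠ v.1 ∧ u.2 = v.2) ∨ (u.1 = v.1 ∧ (cycleZMod n).Adj u.2 v.2) := by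
  rw [SimpleGraph.boxProd_adj]
  constructor
  · rintro (⟨h1, h2⟩ | ⟨h1, h2⟩)
    · exact Or.inl ⟨h1.ne, h2⟩
    · exact Or.inr ⟨h2, h1⟩
  · rintro (⟨h1, h2⟩ | ⟨h1, h2⟩)
    · exact Or.inl ⟨h1, h2⟩
    · exact Or.inr ⟨h2, h1⟩

lemma prism_adj' {n : ℕ} {s t : Fin 2} {y z : ZMod n} :
    ((⊤ : SimpleGraph (Fin 2)) □ cycleZMod n).Adj (s, y) (t, z) ↔
      (s ≠ t ∧ y = z) ∨ (s = t ∧ (cycleZMod n).Adj y z) :=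
  prism_adj

/-- The 2-factor consisting of the two layer cycles. -/
def layerH (n : ℕ) : SimpleGraph (Fin 2 × ZMod n) :=
  SimpleGraph.fromRel (fun p q => p.1 = q.1 ∧ q.2 = p.2 + 1)

lemma one_ne_zero_zmod (hn : 4 ≤ n) : (1 : ZMod n) ≠ 0 := by
  have := zmod_natCast_ne_zero (n := n) (by omega) (k := 1) (by omega) (by omega)
  simpa using this

lemma two_ne_zero_zmod (hn : 4 ≤ n) : (2 : ZMod n) ≠ 0 := by
  have := zmod_natCast_ne_zero (n := n) (by omega) (k := 2) (by omega) (by omega)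
  simpa using this

lemma add_one_ne_self (hn : 4 ≤ n) (y : ZMod n) : y + 1 ≠ y := by
  intro h
  have : (1 : ZMod n) = 0 := by
    have := congrArg (fun w => w - y) h
    simpa [add_comm, add_sub_cancel_left] using this
  exact one_ne_zero_zmod hn this

lemma layerH_adj (hn : 4 ≤ n) {p q : Fin 2 × ZMod n} :
    (layerH n).Adj p q ↔ p.1 = q.1 ∧ (q.2 = p.2 + 1 ∨ p.2 = q.2 + 1) := by
  rw [layerH, SimpleGraph.fromRel_adj]
  constructor
  · rintro ⟨hne, ⟨h1, h2⟩ | ⟨h1, h2⟩⟩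
    · exact ⟨h1, Or.inl h2⟩
    · exact ⟨h1.symm, Or.inr h2⟩
  · rintro ⟨h1, h2 | h2⟩
    · refine ⟨?_, Or.inl ⟨h1, h2⟩⟩
      intro h
      rw [h] at h2
      exact add_one_ne_self hn q.2 h2.symm
    · refine ⟨?_, Or.inr ⟨h1.symm, h2⟩⟩
      intro h
      rw [h] at h2
      exact add_one_ne_self hn q.2 h2.symm

lemma layerH_le (hn : 4 ≤ n) : layerH n ≤ (⊤ : SimpleGraph (Fin 2)) □ cycleZMod n := by
  intro p q h
  rw [layerH_adj hn] at h
  rw [prism_adj]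
  obtain ⟨h1, h2⟩ := h
  refine Or.inr ⟨h1, ?_⟩
  rw [cyc_adj]
  rcases h2 with h2 | h2
  · refine ⟨fun he => ?_, Or.inr (by rw [h2]; ring)⟩
    rw [← he] at h2
    exact add_one_ne_self hn p.2 h2.symm
  · refine ⟨fun he => ?_, Or.inl (by rw [h2]; ring)⟩
    rw [he] at h2
    exact add_one_ne_self hn q.2 h2.symm

lemma layerH_adj' (hn : 4 ≤ n) {s t : Fin 2} {y z : ZMod n} :
    (layerH n).Adj (s, y) (t, z) ↔ s = t ∧ (z = y + 1 ∨ y = z + 1) :=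
  layerH_adj hn

lemma layerH_nbr (hn : 4 ≤ n) (s : Fin 2) (y : ZMod n) :
    (layerH n).neighborSet (s, y) = {(s, y + 1), (s, y - 1)} := by
  ext ⟨t, z⟩
  show (layerH n).Adj (s, y) (t, z) ↔ _
  rw [layerH_adj' hn, Set.mem_insert_iff, Set.mem_singleton_iff, Prod.mk.injEq, Prod.mk.injEq]
  constructor
  · rintro ⟨h1, h2 | h2⟩
    · exact Or.inl ⟨h1.symm, h2⟩
    · refine Or.inr ⟨h1.symm, ?_⟩
      rw [h2]; ring
  · rintro (⟨h1, h2⟩ | ⟨h1, h2⟩)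
    · exact ⟨h1.symm, Or.inl h2⟩
    · refine ⟨h1.symm, Or.inr ?_⟩
      rw [h2]; ring
  
lemma layerH_deg (hn : 4 ≤ n) (w : Fin 2 × ZMod n) :
    ((layerH n).neighborSet w).ncard = 2 := by
  obtain ⟨s, y⟩ := w
  rw [layerH_nbr hn]
  apply Set.ncard_pair
  intro h
  rw [Prod.ext_iff] at h
  have h2 := h.2
  simp only at h2
  have : (2 : ZMod n) = 0 := by
    have := congrArg (fun w => w - (y - 1)) h2
    calc (2 : ZMod n) = (y + 1) - (y - 1) := by ring
    _ = 0 := by rw [h2]; ring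
  exact two_ne_zero_zmod hn this

lemma layerH_layer_const (hn : 4 ≤ n) {p q : Fin 2 × ZMod n}
    (h : (layerH n).Reachable p q) : p.1 = q.1 :=
  walk_invariant Prod.fst (fun u v huv => ((layerH_adj hn).mp huv).1) h

lemma layerH_reach (hn : 4 ≤ n) (s : Fin 2) (y : ZMod n) (t : ℕ) :
    (layerH n).Reachable (s, y) (s, y + (t : ZMod n)) := by
  induction t with
  | zero => simpa using SimpleGraph.Reachable.refl (s, y)
  | succ t ih =>
    refine ih.trans ?_
    have hadj : (layerH n).Adj (s, y + (t : ZMod n)) (s, y + ((t + 1 : ℕ) : ZMod n)) := by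
      rw [layerH_adj hn]
      refine ⟨rfl, Or.inl ?_⟩
      push_cast
      ring
    exact hadj.reachable

lemma layerH_reach_all (hn : 4 ≤ n) (s : Fin 2) (y z : ZMod n) :
    (layerH n).Reachable (s, y) (s, z) := by
  haveI : NeZero n := ⟨by omega⟩
  have := layerH_reach hn s y (z - y).val
  rwa [ZMod.natCast_rightInverse (z - y), add_sub_cancel] at this

lemma fin2_cases (x y z : Fin 2) (h : x ≠ y) : z = x ∨ z = y := by
  fin_cases x <;> fin_cases y <;> fin_cases z <;> simp_all

lemma layer_case (hn : 4 ≤ n) {u v : Fin 2 × ZMod n} (h1 : u.1 ≠ v.1) :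
    ∃ H, IsTwoFactor ((⊤ : SimpleGraph (Fin 2)) □ cycleZMod n) H ∧ SeparatesSet H {u, v} := by
  refine ⟨layerH n, ⟨layerH_le hn, layerH_deg hn⟩, ?_⟩
  intro C
  obtain ⟨w, hw⟩ := C.exists_rep
  have hreach : ∀ x : Fin 2 × ZMod n, x.1 = w.1 →
      (layerH n).connectedComponentMk x = C := by
    intro x hx
    rw [← hw]
    apply SimpleGraph.ConnectedComponent.sound
    obtain ⟨x1, x2⟩ := x
    obtain ⟨w1, w2⟩ := w
    simp only at hx
    rw [hx]
    exact layerH_reach_all hn w1 x2 w2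
  rcases fin2_cases u.1 v.1 w.1 h1 with hcase | hcase
  · refine ⟨u, ⟨by simp, hreach u hcase.symm⟩, ?_⟩
    rintro x ⟨hxA, hxC⟩
    rcases Finset.mem_insert.mp hxA with rfl | hx2
    · rfl
    · rw [Finset.mem_singleton] at hx2
      subst hx2
      exfalso
      have hr : (layerH n).Reachable x w :=
        SimpleGraph.ConnectedComponent.exact (hxC.trans hw.symm)
      have hl := layerH_layer_const hn hr
      exact h1 (hl.trans hcase).symm
  · refine ⟨v, ⟨by simp, hreach v hcase.symm⟩, ?_⟩
    rintro x ⟨hxA, hxC⟩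
    rcases Finset.mem_insert.mp hxA with rfl | hx2
    · exfalso
      have hr : (layerH n).Reachable x w :=
        SimpleGraph.ConnectedComponent.exact (hxC.trans hw.symm)
      have hl := layerH_layer_const hn hr
      exact h1 (hl.trans hcase)
    · rw [Finset.mem_singleton] at hx2
      exact hx2

end Prism
/-! ### rectangle 2-factors -/

section Rect

variable {n : ℕ}

/-- membership in the first interval of columns -/
def inI (c : ZMod n) (p : ℕ) (y : ZMod n) : Prop := (y - c).val < p

/-- the four columns carrying vertical edges -/
def VertCol (n : ℕ) (c : ZMod n) (p : ℕ) (y : ZMod n) : Prop :=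
  y = c ∨ y = c + ((p - 1 : ℕ) : ZMod n) ∨ y = c + ((p : ℕ) : ZMod n) ∨ y = c + ((n - 1 : ℕ) : ZMod n)

/-- the rectangle 2-factor: two "ladder" cycles over the two intervals of columns
`[c, c+p)` and `[c+p, c+n)`. -/
def rectH (n : ℕ) (c : ZMod n) (p : ℕ) : SimpleGraph (Fin 2 × ZMod n) :=
  SimpleGraph.fromRel (fun q r =>
    (q.1 = r.1 ∧ r.2 = q.2 + 1 ∧ (inI c p q.2 ↔ inI c p r.2)) ∨
    (q.2 = r.2 ∧ q.1 ≠ r.1 ∧ VertCol n c p q.2))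

lemma rectH_adj' (hn : 4 ≤ n) {c : ZMod n} {p : ℕ} {s t : Fin 2} {y z : ZMod n} :
    (rectH n c p).Adj (s, y) (t, z) ↔
      (s = t ∧ (z = y + 1 ∨ y = z + 1) ∧ (inI c p y ↔ inI c p z)) ∨
      (y = z ∧ s ≠ t ∧ VertCol n c p y) := by
  rw [rectH, SimpleGraph.fromRel_adj]
  constructor
  · rintro ⟨hne, (⟨h1, h2, h3⟩ | ⟨h1, h2, h3⟩) | (⟨h1, h2, h3⟩ | ⟨h1, h2, h3⟩)⟩
    · exact Or.inl ⟨h1, Or.inl h2, h3⟩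
    · exact Or.inr ⟨h1, h2, h3⟩
    · exact Or.inl ⟨h1.symm, Or.inr h2, h3.symm⟩
    · refine Or.inr ⟨h1.symm, h2.symm, ?_⟩
      first
      | exact h3
      | (rwa [show z = y from h1] at h3)
  · rintro (⟨h1, h2 | h2, h3⟩ | ⟨h1, h2, h3⟩)
    · refine ⟨fun he => ?_, Or.inl (Or.inl ⟨h1, h2, h3⟩)⟩
      rw [Prod.ext_iff] at he
      have he2 : y = z := he.2
      rw [← he2] at h2
      exact add_one_ne_self hn y h2.symm
    · refine ⟨fun he => ?_, Or.inr (Or.inl ⟨h1.symm, h2, h3.symm⟩)⟩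
      rw [Prod.ext_iff] at he
      have he2 : y = z := he.2
      rw [he2] at h2
      exact add_one_ne_self hn z h2.symm
    · refine ⟨fun he => ?_, Or.inl (Or.inr ⟨h1, h2, h3⟩)⟩
      rw [Prod.ext_iff] at he
      have he1 : s = t := he.1
      exact h2 he1

lemma col_inj {k l : ℕ} (hk : k < n) (hl : l < n) {c : ZMod n} :
    c + (k : ZMod n) = c + (l : ZMod n) ↔ k = l := by
  rw [add_right_inj]
  constructor
  · intro h
    have := congrArg ZMod.val h
    rwa [ZMod.val_cast_of_lt hk, ZMod.val_cast_of_lt hl] at this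
  · rintro rfl; rfl

lemma col_decomp (hn : 4 ≤ n) (c y : ZMod n) :
    y = c + (((y - c).val : ℕ) : ZMod n) := by
  haveI : NeZero n := ⟨by omega⟩
  rw [ZMod.natCast_rightInverse (y - c)]
  ring

lemma inI_col (hn : 4 ≤ n) {c : ZMod n} {p k : ℕ} (hk : k < n) :
    inI c p (c + (k : ZMod n)) ↔ k < p := by
  rw [inI, add_sub_cancel_left, ZMod.val_cast_of_lt hk]

lemma succ_col (hn : 4 ≤ n) {c : ZMod n} {k l : ℕ} (hk : k < n) (hl : l < n) :
    c + (l : ZMod n) = c + (k : ZMod n) + 1 ↔ (l = k + 1 ∨ (k = n - 1 ∧ l = 0)) := by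
  have hcast : c + (k : ZMod n) + 1 = c + ((k + 1 : ℕ) : ZMod n) := by
    push_cast; ring
  rw [hcast]
  by_cases hk1 : k + 1 = n
  · have : ((k + 1 : ℕ) : ZMod n) = ((0 : ℕ) : ZMod n) := by
      rw [hk1]; simp [ZMod.natCast_self]
    rw [this, col_inj (k := l) (l := 0) hl (by omega)]
    constructor
    · intro h; omega
    · rintro (h | ⟨h1, h2⟩) <;> omega
  · rw [col_inj (k := l) (l := k + 1) hl (by omega)]
    constructor
    · intro h; omega
    · rintro (h | ⟨h1, h2⟩) <;> omega

lemma vertcol_iff (hn : 4 ≤ n) {c : ZMod n} {p k : ℕ} (hp2 : 2 ≤ p) (hpn : p + 2 ≤ n)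
    (hk : k < n) :
    VertCol n c p (c + (k : ZMod n)) ↔ (k = 0 ∨ k = p - 1 ∨ k = p ∨ k = n - 1) := by
  have h0 : (c : ZMod n) = c + ((0 : ℕ) : ZMod n) := by simp
  rw [VertCol]
  rw [show (c = c + ((0:ℕ) : ZMod n) ↔ True) from iff_of_true (by simp) trivial] at *
  constructor
  · rintro (h | h | h | h)
    · left
      have : c + (k : ZMod n) = c + ((0 : ℕ) : ZMod n) := by simpa using h
      exact (col_inj hk (by omega)).mp this
    · right; left; exact (col_inj hk (by omega)).mp h
    · right; right; left; exact (col_inj hk (by omega)).mp h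
    · right; right; right; exact (col_inj hk (by omega)).mp h
  · rintro (h | h | h | h)
    · left
      have : c + (k : ZMod n) = c + ((0 : ℕ) : ZMod n) := by rw [(col_inj hk (by omega)).mpr h]
      simpa using this
    · right; left; exact (col_inj hk (by omega)).mpr h
    · right; right; left; exact (col_inj hk (by omega)).mpr h
    · right; right; right; exact (col_inj hk (by omega)).mpr h

lemma rect_adj_cols (hn : 4 ≤ n) {c : ZMod n} {p : ℕ} (hp2 : 2 ≤ p) (hpn : p + 2 ≤ n)
    {s t : Fin 2} {k l : ℕ} (hk : k < n) (hl : l < n) :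
    (rectH n c p).Adj (s, c + (k : ZMod n)) (t, c + (l : ZMod n)) ↔
      (s = t ∧ ((l = k + 1 ∨ (k = n - 1 ∧ l = 0)) ∨ (k = l + 1 ∨ (l = n - 1 ∧ k = 0)))
        ∧ (k < p ↔ l < p)) ∨
      (k = l ∧ s ≠ t ∧ (k = 0 ∨ k = p - 1 ∨ k = p ∨ k = n - 1)) := by
  rw [rectH_adj' hn]
  have e1 := succ_col (c := c) hn hk hl
  have e2 := succ_col (c := c) hn hl hk
  have e3 := inI_col (c := c) (p := p) hn hk
  have e4 := inI_col (c := c) (p := p) hn hl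
  have e5 := vertcol_iff (c := c) hn hp2 hpn hk
  have e6 := col_inj (c := c) hk hl
  rw [e1, e2, e3, e4, e5, e6]

lemma fin2_ne_iff (s t : Fin 2) : s ≠ t ↔ t = 1 - s := by revert s t; decide

lemma fin2_flip_ne (s : Fin 2) : s ≠ 1 - s := by revert s; decide

lemma rect_deg (hn : 4 ≤ n) {c : ZMod n} {p : ℕ} (hp2 : 2 ≤ p) (hpn : p + 2 ≤ n)
    (w : Fin 2 × ZMod n) : ((rectH n c p).neighborSet w).ncard = 2 := by
  haveI : NeZero n := ⟨by omega⟩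
  obtain ⟨s, y⟩ := w
  set k := (y - c).val with hkdef
  have hk : k < n := ZMod.val_lt _
  have hy : y = c + (k : ZMod n) := col_decomp hn c y
  -- generic membership description
  have hmem : ∀ (t : Fin 2) (l : ℕ), l < n →
      ((t, c + (l : ZMod n)) ∈ (rectH n c p).neighborSet (s, c + (k : ZMod n)) ↔
      ((s = t ∧ ((l = k + 1 ∨ (k = n - 1 ∧ l = 0)) ∨ (k = l + 1 ∨ (l = n - 1 ∧ k = 0)))
        ∧ (k < p ↔ l < p)) ∨
      (k = l ∧ s ≠ t ∧ (k = 0 ∨ k = p - 1 ∨ k = p ∨ k = n - 1)))) := by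
    intro t l hl
    exact rect_adj_cols hn hp2 hpn hk hl
  rw [hy]
  -- case analysis on k
  have main : ∃ (t2 : Fin 2) (k1 k2 : ℕ), k1 < n ∧ k2 < n ∧ ((t2 = s ∧ k1 ≠ k2) ∨ t2 = 1 - s) ∧
      (rectH n c p).neighborSet (s, c + (k : ZMod n)) =
        {(s, c + (k1 : ZMod n)), (t2, c + (k2 : ZMod n))} := by
    by_cases h0 : k = 0
    · refine ⟨1 - s, 1, 0, by omega, by omega, Or.inr rfl, ?_⟩
      ext ⟨t, z⟩
      obtain ⟨l, hl, rfl⟩ : ∃ l, l < n ∧ z = c + (l : ZMod n) :=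
        ⟨(z - c).val, ZMod.val_lt _, col_decomp hn c z⟩
      rw [hmem t l hl, Set.mem_insert_iff, Set.mem_singleton_iff, Prod.mk.injEq, Prod.mk.injEq,
        col_inj hl (by omega), col_inj hl (by omega)]
      constructor
      · rintro (⟨ht, hor, hcls⟩ | ⟨hkl, htne, hvert⟩)
        · left; exact ⟨ht.symm, by omega⟩
        · right; exact ⟨(fin2_ne_iff s t).mp htne, by omega⟩
      · rintro (⟨rfl, hl1⟩ | ⟨rfl, hlk⟩)
        · exact Or.inl ⟨rfl, by omega, by omega⟩
        · exact Or.inr ⟨by omega, (fin2_ne_iff s (1 - s)).mpr rfl, by omega⟩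
    · by_cases h1 : k = p - 1
      · refine ⟨1 - s, p - 2, k, by omega, by omega, Or.inr rfl, ?_⟩
        ext ⟨t, z⟩
        obtain ⟨l, hl, rfl⟩ : ∃ l, l < n ∧ z = c + (l : ZMod n) :=
          ⟨(z - c).val, ZMod.val_lt _, col_decomp hn c z⟩
        rw [hmem t l hl, Set.mem_insert_iff, Set.mem_singleton_iff, Prod.mk.injEq, Prod.mk.injEq,
          col_inj hl (by omega), col_inj hl (by omega)]
        constructor
        · rintro (⟨ht, hor, hcls⟩ | ⟨hkl, htne, hvert⟩)
          · left; exact ⟨ht.symm, by omega⟩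
          · right; exact ⟨(fin2_ne_iff s t).mp htne, by omega⟩
        · rintro (⟨rfl, hl1⟩ | ⟨rfl, hlk⟩)
          · exact Or.inl ⟨rfl, by omega, by omega⟩
          · exact Or.inr ⟨by omega, (fin2_ne_iff s (1 - s)).mpr rfl, by omega⟩
      · by_cases h2 : k = p
        · refine ⟨1 - s, p + 1, k, by omega, by omega, Or.inr rfl, ?_⟩
          ext ⟨t, z⟩
          obtain ⟨l, hl, rfl⟩ : ∃ l, l < n ∧ z = c + (l : ZMod n) :=
            ⟨(z - c).val, ZMod.val_lt _, col_decomp hn c z⟩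
          rw [hmem t l hl, Set.mem_insert_iff, Set.mem_singleton_iff, Prod.mk.injEq, Prod.mk.injEq,
            col_inj hl (by omega), col_inj hl (by omega)]
          constructor
          · rintro (⟨ht, hor, hcls⟩ | ⟨hkl, htne, hvert⟩)
            · left; exact ⟨ht.symm, by omega⟩
            · right; exact ⟨(fin2_ne_iff s t).mp htne, by omega⟩
          · rintro (⟨rfl, hl1⟩ | ⟨rfl, hlk⟩)
            · exact Or.inl ⟨rfl, by omega, by omega⟩
            · exact Or.inr ⟨by omega, (fin2_ne_iff s (1 - s)).mpr rfl, by omega⟩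
        · by_cases h3 : k = n - 1
          · refine ⟨1 - s, n - 2, k, by omega, by omega, Or.inr rfl, ?_⟩
            ext ⟨t, z⟩
            obtain ⟨l, hl, rfl⟩ : ∃ l, l < n ∧ z = c + (l : ZMod n) :=
              ⟨(z - c).val, ZMod.val_lt _, col_decomp hn c z⟩
            rw [hmem t l hl, Set.mem_insert_iff, Set.mem_singleton_iff, Prod.mk.injEq, Prod.mk.injEq,
              col_inj hl (by omega), col_inj hl (by omega)]
            constructor
            · rintro (⟨ht, hor, hcls⟩ | ⟨hkl, htne, hvert⟩)
              · left; exact ⟨ht.symm, by omega⟩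
              · right; exact ⟨(fin2_ne_iff s t).mp htne, by omega⟩
            · rintro (⟨rfl, hl1⟩ | ⟨rfl, hlk⟩)
              · exact Or.inl ⟨rfl, by omega, by omega⟩
              · exact Or.inr ⟨by omega, (fin2_ne_iff s (1 - s)).mpr rfl, by omega⟩
          · -- interior column
            refine ⟨s, k - 1, k + 1, by omega, by omega, Or.inl ⟨rfl, by omega⟩, ?_⟩
            ext ⟨t, z⟩
            obtain ⟨l, hl, rfl⟩ : ∃ l, l < n ∧ z = c + (l : ZMod n) :=
              ⟨(z - c).val, ZMod.val_lt _, col_decomp hn c z⟩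
            rw [hmem t l hl, Set.mem_insert_iff, Set.mem_singleton_iff, Prod.mk.injEq, Prod.mk.injEq,
              col_inj hl (by omega), col_inj hl (by omega)]
            constructor
            · rintro (⟨ht, hor, hcls⟩ | ⟨hkl, htne, hvert⟩)
              · rcases hor with (hor | hor) | (hor | hor)
                · right; exact ⟨ht.symm, by omega⟩
                · omega
                · left; exact ⟨ht.symm, by omega⟩
                · omega
              · omega
            · rintro (⟨rfl, hl1⟩ | ⟨rfl, hlk⟩)
              · exact Or.inl ⟨rfl, by omega, by omega⟩
              · exact Or.inl ⟨rfl, by omega, by omega⟩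
  obtain ⟨t2, k1, k2, hk1, hk2, hne, hset⟩ := main
  rw [hset]
  apply Set.ncard_pair
  rcases hne with ⟨rfl, hkk⟩ | rfl
  · intro h
    rw [Prod.mk.injEq] at h
    exact hkk ((col_inj hk1 hk2).mp h.2)
  · intro h
    rw [Prod.mk.injEq] at h
    exact fin2_flip_ne s h.1

end Rect
section RectReach

variable {n : ℕ}

lemma col_zero (c : ZMod n) : c + ((0 : ℕ) : ZMod n) = c := by simp

lemma rect_le (hn : 4 ≤ n) {c : ZMod n} {p : ℕ} :
    rectH n c p ≤ (⊤ : SimpleGraph (Fin 2)) □ cycleZMod n := by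
  rintro ⟨s, y⟩ ⟨t, z⟩ h
  rw [rectH_adj' hn] at h
  rw [prism_adj]
  rcases h with ⟨h1, h2, h3⟩ | ⟨h1, h2, h3⟩
  · refine Or.inr ⟨h1, ?_⟩
    rw [cyc_adj]
    rcases h2 with h2 | h2
    · refine ⟨fun he => ?_, Or.inr (by rw [h2]; ring)⟩
      have he2 : y = z := he
      rw [← he2] at h2
      exact add_one_ne_self hn y h2.symm
    · refine ⟨fun he => ?_, Or.inl (by rw [h2]; ring)⟩
      have he2 : y = z := he
      rw [he2] at h2
      exact add_one_ne_self hn z h2.symm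
  · exact Or.inl ⟨h2, h1⟩

lemma rect_reach_I1 (hn : 4 ≤ n) {c : ZMod n} {p : ℕ} (hp2 : 2 ≤ p) (hpn : p + 2 ≤ n)
    (s : Fin 2) (k : ℕ) (hk : k < p) :
    (rectH n c p).Reachable (s, c + (k : ZMod n)) (s, c) := by
  induction k with
  | zero => rw [Nat.cast_zero, add_zero]
  | succ k ih =>
    have hadj : (rectH n c p).Adj (s, c + ((k + 1 : ℕ) : ZMod n)) (s, c + (k : ZMod n)) := by
      rw [rect_adj_cols hn hp2 hpn (by omega) (by omega)]
      exact Or.inl ⟨rfl, Or.inr (Or.inl (by omega)), by omega⟩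
    exact hadj.reachable.trans (ih (by omega))

lemma rect_reach_I2 (hn : 4 ≤ n) {c : ZMod n} {p : ℕ} (hp2 : 2 ≤ p) (hpn : p + 2 ≤ n)
    (s : Fin 2) (j : ℕ) (hj : p + j < n) :
    (rectH n c p).Reachable (s, c + ((p + j : ℕ) : ZMod n)) (s, c + ((p : ℕ) : ZMod n)) := by
  induction j with
  | zero => rw [Nat.add_zero]
  | succ j ih =>
    have hadj : (rectH n c p).Adj (s, c + ((p + (j + 1) : ℕ) : ZMod n))
        (s, c + ((p + j : ℕ) : ZMod n)) := by
      rw [rect_adj_cols hn hp2 hpn (by omega) (by omega)]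
      exact Or.inl ⟨rfl, Or.inr (Or.inl (by omega)), by omega⟩
    exact hadj.reachable.trans (ih (by omega))

lemma rect_cross0 (hn : 4 ≤ n) {c : ZMod n} {p : ℕ} (hp2 : 2 ≤ p) (hpn : p + 2 ≤ n)
    {s t : Fin 2} (hst : s ≠ t) : (rectH n c p).Adj (s, c) (t, c) := by
  have h := rect_adj_cols (c := c) (p := p) hn hp2 hpn (s := s) (t := t)
    (k := 0) (l := 0) (by omega) (by omega)
  rw [col_zero] at h
  rw [h]
  exact Or.inr ⟨rfl, hst, Or.inl rfl⟩

lemma rect_crossp (hn : 4 ≤ n) {c : ZMod n} {p : ℕ} (hp2 : 2 ≤ p) (hpn : p + 2 ≤ n)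
    {s t : Fin 2} (hst : s ≠ t) :
    (rectH n c p).Adj (s, c + ((p : ℕ) : ZMod n)) (t, c + ((p : ℕ) : ZMod n)) := by
  rw [rect_adj_cols hn hp2 hpn (by omega) (by omega)]
  exact Or.inr ⟨rfl, hst, by omega⟩

lemma rect_base1 (hn : 4 ≤ n) {c : ZMod n} {p : ℕ} (hp2 : 2 ≤ p) (hpn : p + 2 ≤ n)
    (w : Fin 2 × ZMod n) (hw : inI c p w.2) :
    (rectH n c p).Reachable w (0, c) := by
  haveI : NeZero n := ⟨by omega⟩
  obtain ⟨s, y⟩ := w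
  have hy : y = c + (((y - c).val : ℕ) : ZMod n) := col_decomp hn c y
  have hkp : (y - c).val < p := hw
  have hr : (rectH n c p).Reachable (s, y) (s, c) := by
    rw [show ((s, y) : Fin 2 × ZMod n) = (s, c + (((y - c).val : ℕ) : ZMod n)) by rw [← hy]]
    exact rect_reach_I1 hn hp2 hpn s _ hkp
  fin_cases s
  · exact hr
  · exact hr.trans (rect_cross0 hn hp2 hpn (by decide)).reachable

lemma rect_base2 (hn : 4 ≤ n) {c : ZMod n} {p : ℕ} (hp2 : 2 ≤ p) (hpn : p + 2 ≤ n)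
    (w : Fin 2 × ZMod n) (hw : ¬ inI c p w.2) :
    (rectH n c p).Reachable w (0, c + ((p : ℕ) : ZMod n)) := by
  haveI : NeZero n := ⟨by omega⟩
  obtain ⟨s, y⟩ := w
  have hy : y = c + (((y - c).val : ℕ) : ZMod n) := col_decomp hn c y
  have hkp : p ≤ (y - c).val := le_of_not_gt hw
  have hkn : (y - c).val < n := ZMod.val_lt _
  have hr : (rectH n c p).Reachable (s, y) (s, c + ((p : ℕ) : ZMod n)) := by
    rw [show ((s, y) : Fin 2 × ZMod n) = (s, c + (((y - c).val : ℕ) : ZMod n)) by rw [← hy]]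
    have := rect_reach_I2 (c := c) hn hp2 hpn s ((y - c).val - p) (by omega)
    rwa [show p + ((y - c).val - p) = (y - c).val by omega] at this
  fin_cases s
  · exact hr
  · exact hr.trans (rect_crossp hn hp2 hpn (by decide)).reachable

lemma rect_class_const (hn : 4 ≤ n) {c : ZMod n} {p : ℕ} {u v : Fin 2 × ZMod n}
    (h : (rectH n c p).Reachable u v) : inI c p u.2 ↔ inI c p v.2 := by
  have := walk_invariant (fun w : Fin 2 × ZMod n => inI c p w.2) (fun x y hxy => by
    obtain ⟨s, a⟩ := x
    obtain ⟨t, b⟩ := y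
    rw [rectH_adj' hn] at hxy
    rcases hxy with ⟨h1, h2, h3⟩ | ⟨h1, h2, h3⟩
    · exact propext h3
    · show inI c p a = inI c p b
      rw [show a = b from h1]) h
  exact Iff.of_eq this

lemma rect_sep (hn : 4 ≤ n) {c : ZMod n} {p : ℕ} (hp2 : 2 ≤ p) (hpn : p + 2 ≤ n)
    {α β : Fin 2 × ZMod n} (hα : inI c p α.2) (hβ : ¬ inI c p β.2) :
    SeparatesSet (rectH n c p) {α, β} := by
  intro C
  obtain ⟨w, hw⟩ := C.exists_rep
  by_cases hcls : inI c p w.2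
  · refine ⟨α, ⟨by simp, ?_⟩, ?_⟩
    · rw [← hw]
      exact SimpleGraph.ConnectedComponent.sound
        ((rect_base1 hn hp2 hpn α hα).trans (rect_base1 hn hp2 hpn w hcls).symm)
    · rintro x ⟨hxA, hxC⟩
      rcases Finset.mem_insert.mp hxA with rfl | hx2
      · rfl
      · rw [Finset.mem_singleton] at hx2
        subst hx2
        exfalso
        have hr : (rectH n c p).Reachable x w :=
          SimpleGraph.ConnectedComponent.exact (hxC.trans hw.symm)
        exact hβ ((rect_class_const hn hr).mpr hcls)
  · refine ⟨β, ⟨by simp, ?_⟩, ?_⟩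
    · rw [← hw]
      exact SimpleGraph.ConnectedComponent.sound
        ((rect_base2 hn hp2 hpn β hβ).trans (rect_base2 hn hp2 hpn w hcls).symm)
    · rintro x ⟨hxA, hxC⟩
      rcases Finset.mem_insert.mp hxA with rfl | hx2
      · exfalso
        have hr : (rectH n c p).Reachable x w :=
          SimpleGraph.ConnectedComponent.exact (hxC.trans hw.symm)
        exact hcls ((rect_class_const hn hr).mp hα)
      · rw [Finset.mem_singleton] at hx2
        exact hx2

lemma same_layer_case (hn : 4 ≤ n) {u v : Fin 2 × ZMod n} (h1 : u.1 = v.1) (h2 : u.2 ≠ v.2) :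
    ∃ H, IsTwoFactor ((⊤ : SimpleGraph (Fin 2)) □ cycleZMod n) H ∧ SeparatesSet H {u, v} := by
  haveI : NeZero n := ⟨by omega⟩
  set d := (v.2 - u.2).val with hd
  have hdn : d < n := ZMod.val_lt _
  have hdcast : ((d : ℕ) : ZMod n) = v.2 - u.2 := ZMod.natCast_rightInverse (v.2 - u.2)
  have hd0 : 0 < d := by
    rcases Nat.eq_zero_or_pos d with h | h
    · exfalso
      rw [h] at hdcast
      simp only [Nat.cast_zero] at hdcast
      exact h2 (sub_eq_zero.mp hdcast.symm).symm
    · exact h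
  by_cases hcase : 2 ≤ d ∧ d ≤ n - 2
  · refine ⟨rectH n u.2 d, ⟨rect_le hn, rect_deg hn (by omega) (by omega)⟩,
      rect_sep hn (by omega) (by omega) ?_ ?_⟩
    · show (u.2 - u.2).val < d
      rw [sub_self, ZMod.val_zero]
      omega
    · show ¬ ((v.2 - u.2).val < d)
      omega
  · by_cases hcase1 : d = 1
    · refine ⟨rectH n (u.2 - 1) 2, ⟨rect_le hn, rect_deg hn (by omega) (by omega)⟩,
        rect_sep hn (by omega) (by omega) ?_ ?_⟩
      · show (u.2 - (u.2 - 1)).val < 2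
        rw [show u.2 - (u.2 - 1) = ((1 : ℕ) : ZMod n) by push_cast; ring]
        rw [ZMod.val_cast_of_lt (by omega)]
        omega
      · show ¬ ((v.2 - (u.2 - 1)).val < 2)
        rw [show v.2 - (u.2 - 1) = ((2 : ℕ) : ZMod n) by
          rw [show v.2 - (u.2 - 1) = (v.2 - u.2) + 1 by ring, ← hdcast, hcase1]
          push_cast; ring]
        rw [ZMod.val_cast_of_lt (by omega)]
        omega
    · -- d = n - 1
      have hcase2 : d = n - 1 := by omega
      rw [show ({u, v} : Finset (Fin 2 × ZMod n)) = {v, u} from Finset.pair_comm u v]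
      refine ⟨rectH n (v.2 - 1) 2, ⟨rect_le hn, rect_deg hn (by omega) (by omega)⟩,
        rect_sep hn (by omega) (by omega) ?_ ?_⟩
      · show (v.2 - (v.2 - 1)).val < 2
        rw [show v.2 - (v.2 - 1) = ((1 : ℕ) : ZMod n) by push_cast; ring]
        rw [ZMod.val_cast_of_lt (by omega)]
        omega
      · show ¬ ((u.2 - (v.2 - 1)).val < 2)
        have hsub : u.2 - v.2 = ((1 : ℕ) : ZMod n) := by
          rw [show u.2 - v.2 = -(v.2 - u.2) by ring, ← hdcast, hcase2]
          rw [Nat.cast_sub (by omega), ZMod.natCast_self]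
          push_cast
          ring
        rw [show u.2 - (v.2 - 1) = ((2 : ℕ) : ZMod n) by
          rw [show u.2 - (v.2 - 1) = (u.2 - v.2) + 1 by ring, hsub]
          push_cast; ring]
        rw [ZMod.val_cast_of_lt (by omega)]
        omega

lemma prism_sc (hn : 4 ≤ n) :
    SpanningCyclable ((⊤ : SimpleGraph (Fin 2)) □ cycleZMod n) 2 := by
  intro A hA
  obtain ⟨u, v, huv, rfl⟩ := Finset.card_eq_two.mp hA
  by_cases h1 : u.1 = v.1
  · have h2 : u.2 ≠ v.2 := by
      intro h
      exact huv (Prod.ext h1 h)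
    exact same_layer_case hn h1 h2
  · exact layer_case hn h1

end RectReach
/-! ### `Q₃` is spanning cyclable (it is isomorphic to `K₂ □ C₄`) -/

section Hyp3

def q3ToPrism (f : Fin 3 → Bool) : Fin 2 × ZMod 4 :=
  (if f 2 then 1 else 0,
   if f 0 then (if f 1 then 2 else 1) else (if f 1 then 3 else 0))

instance hyp3AdjDec : DecidableRel (hypercube 3).Adj := fun f g =>
  decidable_of_iff _ (SimpleGraph.fromRel_adj _ f g).symm

instance cyc4AdjDec : DecidableRel (cycleZMod 4).Adj := fun x y =>
  decidable_of_iff _ (cyc_adj (n := 4) (y := x) (z := y)).symm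

instance prism4AdjDec : DecidableRel ((⊤ : SimpleGraph (Fin 2)) □ cycleZMod 4).Adj := fun u v =>
  decidable_of_iff _ (prism_adj (n := 4) (u := u) (v := v)).symm

lemma q3_bij : Function.Bijective q3ToPrism := by decide

lemma q3_adj : ∀ f g : Fin 3 → Bool,
    ((⊤ : SimpleGraph (Fin 2)) □ cycleZMod 4).Adj (q3ToPrism f) (q3ToPrism g) ↔
      (hypercube 3).Adj f g := by decide

lemma hyp3_sc : SpanningCyclable (hypercube 3) 2 := by
  have iso : hypercube 3 ≃g ((⊤ : SimpleGraph (Fin 2)) □ cycleZMod 4) :=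
    ⟨Equiv.ofBijective q3ToPrism q3_bij, by intro f g; exact q3_adj f g⟩
  exact spanningCyclable_of_iso iso (prism_sc (by norm_num))

end Hyp3
/-! ### pair case: isomorphism with the prism -/

section PairIso

variable {G : Type*} [AddCommGroup G] [Fintype G] [DecidableEq G]

lemma zmod2_sub_one_iff (s t : ZMod 2) : s - t = 1 ↔ s ≠ t := by revert s t; decide

lemma pair_iso {S : Finset G} {a b : G} (hsymm : ∀ s ∈ S, -s ∈ S)
    (hS : (S : Set G) = {a, -a, b}) (hb2 : b + b = 0)
    (hnotmem : b ∉ AddSubgroup.zmultiples a)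
    (hclos : AddSubgroup.closure (S : Set G) = ⊤)
    (hm : 4 ≤ addOrderOf a) :
    Nonempty (cayleyGraph S ≃g
      ((⊤ : SimpleGraph (Fin 2)) □ cycleZMod (addOrderOf a))) := by
  set m := addOrderOf a with hmdef
  haveI : NeZero m := ⟨by omega⟩
  have hma : (m : ℕ) • a = 0 := addOrderOf_nsmul_eq_zero a
  -- the two building homomorphisms
  set φa : ZMod m →+ G := ZMod.lift m ⟨zmultiplesHom G a, by
    show ((m : ℤ) • a) = 0
    rw [natCast_zsmul, hma]⟩ with hφa
  set φb : ZMod 2 →+ G := ZMod.lift 2 ⟨zmultiplesHom G b, by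
    show ((2 : ℤ) • b) = 0
    rw [two_zsmul, hb2]⟩ with hφb
  set φ : ZMod m × ZMod 2 →+ G := φa.coprod φb with hφ
  have hφa_nat : ∀ k : ℕ, φa ((k : ℕ) : ZMod m) = k • a := by
    intro k
    have : ((k : ℕ) : ZMod m) = ((k : ℤ) : ZMod m) := by push_cast; rfl
    rw [this, hφa, ZMod.lift_coe]
    show (k : ℤ) • a = k • a
    rw [natCast_zsmul]
  have hφa_val : ∀ x : ZMod m, φa x = x.val • a := by
    intro x
    conv_lhs => rw [show x = ((x.val : ℕ) : ZMod m) from (ZMod.natCast_rightInverse x).symm]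
    exact hφa_nat x.val
  have hφb0 : φb 0 = 0 := map_zero φb
  have hφb1 : φb 1 = b := by
    have : (1 : ZMod 2) = ((1 : ℤ) : ZMod 2) := by push_cast; rfl
    rw [this, hφb, ZMod.lift_coe]
    show (1 : ℤ) • b = b
    rw [one_zsmul]
  have hφ10 : φ (1, 0) = a := by
    rw [hφ, AddMonoidHom.coprod_apply, hφb0, add_zero]
    have : (1 : ZMod m) = ((1 : ℕ) : ZMod m) := by push_cast; rfl
    rw [this, hφa_nat, one_nsmul]
  have hφ01 : φ (0, 1) = b := by
    rw [hφ, AddMonoidHom.coprod_apply, map_zero, zero_add, hφb1]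
  have zmod2_cases : ∀ s : ZMod 2, s = 0 ∨ s = 1 := by decide
  -- injectivity
  have hinj : Function.Injective φ := by
    rw [injective_iff_map_eq_zero]
    rintro ⟨x, s⟩ h
    rw [hφ, AddMonoidHom.coprod_apply] at h
    rcases zmod2_cases s with rfl | rfl
    · rw [hφb0, add_zero, hφa_val] at h
      have hdvd : m ∣ x.val := addOrderOf_dvd_iff_nsmul_eq_zero.mpr h
      have hlt : x.val < m := ZMod.val_lt x
      have : x.val = 0 := Nat.eq_zero_of_dvd_of_lt hdvd hlt
      have hx : x = 0 := by
        rw [show x = ((x.val : ℕ) : ZMod m) from (ZMod.natCast_rightInverse x).symm, this,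
          Nat.cast_zero]
      rw [hx]
      rfl
    · exfalso
      rw [hφb1, hφa_val] at h
      apply hnotmem
      refine ⟨-(x.val : ℤ), ?_⟩
      show -(x.val : ℤ) • a = b
      rw [neg_zsmul, natCast_zsmul, neg_eq_iff_add_eq_zero]
      exact h
  -- surjectivity
  have hsurj : Function.Surjective φ := by
    intro g
    have hrange : AddSubgroup.closure (S : Set G) ≤ φ.range := by
      rw [AddSubgroup.closure_le, hS]
      rintro s (hs | hs | hs)
      · exact ⟨(1, 0), by rw [hφ10, hs]⟩
      · rw [hs]
        exact AddSubgroup.neg_mem _ ⟨(1, 0), hφ10⟩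
      · rw [Set.mem_singleton_iff] at hs
        exact ⟨(0, 1), by rw [hφ01, hs]⟩
    have : g ∈ φ.range := hrange (by rw [hclos]; trivial)
    exact this
  -- the S-membership characterization
  have hφneg : φ (-1, 0) = -a := by
    rw [show ((-1, 0) : ZMod m × ZMod 2) = -(1, 0) by rw [Prod.neg_mk, neg_zero], map_neg, hφ10]
  have hSchar : ∀ w : ZMod m × ZMod 2, φ w ∈ S ↔ (w = (1, 0) ∨ w = (-1, 0) ∨ w = (0, 1)) := by
    intro w
    constructor
    · intro hw
      have : φ w ∈ ({a, -a, b} : Set G) := by rw [← hS]; exact_mod_cast hw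
      rcases this with h | h | h
      · exact Or.inl (hinj (by rw [h, hφ10]))
      · exact Or.inr (Or.inl (hinj (by rw [h, hφneg])))
      · rw [Set.mem_singleton_iff] at h
        exact Or.inr (Or.inr (hinj (by rw [h, hφ01])))
    · rintro (rfl | rfl | rfl)
      · rw [hφ10]
        have ha : a ∈ ({a, -a, b} : Set G) := Or.inl rfl
        rw [← hS] at ha
        exact_mod_cast ha
      · rw [hφneg]
        have ha : -a ∈ ({a, -a, b} : Set G) := Or.inr (Or.inl rfl)
        rw [← hS] at ha
        exact_mod_cast ha
      · rw [hφ01]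
        have hb : b ∈ ({a, -a, b} : Set G) := Or.inr (Or.inr rfl)
        rw [← hS] at hb
        exact_mod_cast hb
  -- main adjacency bridge
  have hadj : ∀ (y z : ZMod m) (s t : ZMod 2),
      (cayleyGraph S).Adj (φ (y, s)) (φ (z, t)) ↔
        ((s ≠ t ∧ y = z) ∨ (s = t ∧ ((y - z = 1) ∨ (z - y = 1)))) := by
    intro y z s t
    rw [cay_adj hsymm]
    have hdiff : φ (y, s) - φ (z, t) = φ (y - z, s - t) := by
      rw [← map_sub]
      rfl
    rw [hdiff, hSchar]
    have hne : φ (y, s) ≠ φ (z, t) ↔ ¬ ((y, s) = (z, t)) := by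
      constructor
      · intro h he
        exact h (by rw [he])
      · intro h he
        exact h (hinj he)
    rw [hne]
    simp only [Prod.mk.injEq, Prod.ext_iff]
    constructor
    · rintro ⟨hne', (⟨h1, h2⟩ | ⟨h1, h2⟩ | ⟨h1, h2⟩)⟩
      · refine Or.inr ⟨?_, Or.inl h1⟩
        rwa [sub_eq_zero] at h2
      · refine Or.inr ⟨?_, Or.inr ?_⟩
        · rwa [sub_eq_zero] at h2
        · rw [← neg_sub y z, h1, neg_neg]
      · refine Or.inl ⟨?_, ?_⟩
        · rw [← zmod2_sub_one_iff]
          exact h2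
        · rwa [sub_eq_zero] at h1
    · rintro (⟨h1, h2⟩ | ⟨h1, h2⟩)
      · refine ⟨?_, Or.inr (Or.inr ⟨by rw [h2, sub_self], (zmod2_sub_one_iff s t).mpr h1⟩)⟩
        intro ⟨_, hst⟩
        exact h1 hst
      · have hyz : y ≠ z := by
          intro he
          rcases h2 with h2 | h2 <;> rw [he, sub_self] at h2 <;>
            exact one_ne_zero_zmod hm h2.symm
        refine ⟨fun ⟨hyz', _⟩ => hyz hyz', ?_⟩
        rcases h2 with h2 | h2
        · exact Or.inl ⟨h2, by rw [h1, sub_self]⟩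
        · refine Or.inr (Or.inl ⟨?_, by rw [h1, sub_self]⟩)
          rw [← neg_sub z y, h2]
    
  -- assemble the isomorphism
  set E : (ZMod m × ZMod 2) ≃ G := Equiv.ofBijective φ ⟨hinj, hsurj⟩ with hE
  set eprod : (Fin 2 × ZMod m) ≃ (ZMod m × ZMod 2) :=
    ⟨fun q => (q.2, (q.1 : Fin 2)), fun q => ((q.2 : ZMod 2), q.1),
     fun q => rfl, fun q => rfl⟩ with heprod
  refine ⟨?_⟩
  refine (RelIso.mk (eprod.trans E) ?_).symm
  rintro ⟨s, y⟩ ⟨t, z⟩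
  show (cayleyGraph S).Adj (φ (y, (s : ZMod 2))) (φ (z, (t : ZMod 2))) ↔
    ((⊤ : SimpleGraph (Fin 2)) □ cycleZMod m).Adj (s, y) (t, z)
  refine (hadj y z s t).trans ?_
  rw [prism_adj']
  have hst : ((s : ZMod 2) ≠ (t : ZMod 2)) ↔ s ≠ t := Iff.rfl
  have hst2 : ((s : ZMod 2) = (t : ZMod 2)) ↔ s = t := Iff.rfl
  rw [hst, hst2, cyc_adj]
  constructor
  · rintro (⟨h1, h2⟩ | ⟨h1, h2⟩)
    · exact Or.inl ⟨h1, h2⟩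
    · refine Or.inr ⟨h1, ?_, h2⟩
      intro he
      rcases h2 with h2 | h2 <;> rw [he, sub_self] at h2 <;>
        exact one_ne_zero_zmod hm h2.symm
  · rintro (⟨h1, h2⟩ | ⟨h1, h2, h3⟩)
    · exact Or.inl ⟨h1, h2⟩
    · exact Or.inr ⟨h1, h3⟩

end PairIso
/-! ### Main theorem -/

section Main

variable {G : Type*} [AddCommGroup G] [Fintype G] [DecidableEq G]

lemma pair_main {S : Finset G} {a b : G} (hsymm : ∀ s ∈ S, -s ∈ S)
    (hS : (S : Set G) = {a, -a, b}) (hb2 : b + b = 0) (ha2 : a + a ≠ 0)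
    (ha0 : a ≠ 0) (hb0 : b ≠ 0) (hba : b ≠ a) (hba' : b ≠ -a)
    (hclos : AddSubgroup.closure (S : Set G) = ⊤)
    (h2sc : SpanningCyclable (cayleyGraph S) 2) :
    (Nonempty (cayleyGraph S ≃g hypercube 3) ∨
      ∃ n : ℕ, 4 ≤ n ∧
        Nonempty (cayleyGraph S ≃g ((⊤ : SimpleGraph (Fin 2)) □ cycleZMod n))) := by
  by_cases hmem : b ∈ AddSubgroup.zmultiples a
  · exact absurd h2sc (pair_degenerate_not_sc hsymm hS hb2 ha2 hba hba' hb0 hclos hmem)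
  · set m := addOrderOf a with hmdef
    have hm0 : 0 < m := addOrderOf_pos a
    have hma : m • a = 0 := addOrderOf_nsmul_eq_zero a
    have hm1 : m ≠ 1 := by
      intro h
      exact ha0 (AddMonoid.addOrderOf_eq_one_iff.mp (hmdef ▸ h))
    have hm2 : m ≠ 2 := by
      intro h
      apply ha2
      have := hma
      rw [h, two_nsmul] at this
      exact this
    by_cases hm3 : m = 3
    · have ha3 : a + a + a = 0 := by
        have h3 : (3 : ℕ) • a = 0 := by rw [← hm3]; exact hma
        calc a + a + a = (3 : ℕ) • a := by
              rw [succ_nsmul, two_nsmul]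
        _ = 0 := h3
      exact absurd h2sc (prism3_not_sc hsymm hS hb2 ha2 hba hba' ha0 ha3)
    · have hm4 : 4 ≤ m := by omega
      exact Or.inr ⟨m, hm4, pair_iso hsymm hS hb2 hmem hclos hm4⟩

lemma inv_main {S : Finset G} {b1 b2 b3 : G} (hsymm : ∀ s ∈ S, -s ∈ S)
    (hS : (S : Set G) = {b1, b2, b3})
    (hi1 : b1 + b1 = 0) (hi2 : b2 + b2 = 0) (hi3 : b3 + b3 = 0)
    (h10 : b1 ≠ 0) (h20 : b2 ≠ 0) (h30 : b3 ≠ 0)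
    (h12 : b1 ≠ b2) (h13 : b1 ≠ b3) (h23 : b2 ≠ b3)
    (hclos : AddSubgroup.closure (S : Set G) = ⊤)
    (h2sc : SpanningCyclable (cayleyGraph S) 2) :
    (Nonempty (cayleyGraph S ≃g hypercube 3) ∨
      ∃ n : ℕ, 4 ≤ n ∧
        Nonempty (cayleyGraph S ≃g ((⊤ : SimpleGraph (Fin 2)) □ cycleZMod n))) := by
  by_cases hc : 6 ≤ Fintype.card G
  · left
    have hb : ∀ P : G → Prop, P b1 → P b2 → P b3 → ∀ i : Fin 3, P (![b1, b2, b3] i) := by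
      intro P p1 p2 p3 i
      fin_cases i <;> simpa
    refine inv_case_iso hsymm ![b1, b2, b3] (hb (fun w => w + w = 0) hi1 hi2 hi3)
      (hb (fun w => w ≠ 0) h10 h20 h30) (by simpa) (by simpa) (by simpa) (by simpa)
      hclos hc
  · exact absurd h2sc (not_sc_of_small _ (show (0 : G) ≠ b1 from fun h => h10 h.symm)
      (by omega))

end Main

/-- A connected 3-valent Cayley graph on a finite abelian group is
2-spanning cyclable iff it is isomorphic to `Q_3` or to `K_2 □ C_n` with `n ≥ 4`. -/
theorem statement_2 {G : Type*} [AddCommGroup G] [Fintype G] [DecidableEq G]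
    (S : Finset G) (h0 : (0 : G) ∉ S) (hsymm : ∀ s ∈ S, -s ∈ S) (hcard : S.card = 3)
    (hconn : (cayleyGraph S).Connected) :
    SpanningCyclable (cayleyGraph S) 2 ↔
      (Nonempty (cayleyGraph S ≃g hypercube 3) ∨
        ∃ n : ℕ, 4 ≤ n ∧
          Nonempty (cayleyGraph S ≃g ((⊤ : SimpleGraph (Fin 2)) □ cycleZMod n))) := by
  have hclos : AddSubgroup.closure (S : Set G) = ⊤ := closure_eq_top hconn
  constructor
  · intro h2sc
    obtain ⟨x, y, z, hxy, hxz, hyz, hSeq⟩ := Finset.card_eq_three.mp hcard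
    have hSset : (S : Set G) = {x, y, z} := by rw [hSeq]; simp
    have hxS : x ∈ S := by rw [hSeq]; simp
    have hyS : y ∈ S := by rw [hSeq]; simp
    have hzS : z ∈ S := by rw [hSeq]; simp
    have hx0 : x ≠ 0 := fun h => h0 (h ▸ hxS)
    have hy0 : y ≠ 0 := fun h => h0 (h ▸ hyS)
    have hz0 : z ≠ 0 := fun h => h0 (h ▸ hzS)
    have hmem : ∀ w, w ∈ S → (w = x ∨ w = y ∨ w = z) := by
      intro w hw
      have : w ∈ (S : Set G) := hw
      rw [hSset] at this
      simpa using this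
    rcases hmem _ (hsymm x hxS) with h1 | h1 | h1
    · -- x is an involution
      rcases hmem _ (hsymm y hyS) with h2 | h2 | h2
      · exfalso
        have hy : y = x := by
          rw [show y = -x from by rw [← h2, neg_neg], h1]
        exact hxy hy.symm
      · rcases hmem _ (hsymm z hzS) with h3 | h3 | h3
        · exfalso
          have hz : z = x := by
            rw [show z = -x from by rw [← h3, neg_neg], h1]
          exact hxz hz.symm
        · exfalso
          have hz : z = y := by
            rw [show z = -y from by rw [← h3, neg_neg], h2]
          exact hyz hz.symm
        · exact inv_main hsymm hSset (neg_eq_iff_add_eq_zero.mp h1)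
            (neg_eq_iff_add_eq_zero.mp h2) (neg_eq_iff_add_eq_zero.mp h3)
            hx0 hy0 hz0 hxy hxz hyz hclos h2sc
      · -- -y = z : pair {y, -y}, x is an involution
        have hSs : (S : Set G) = {y, -y, x} := by
          rw [hSset, ← h2]
          ext w
          simp only [Set.mem_insert_iff, Set.mem_singleton_iff]
          tauto
        have ha2 : y + y ≠ 0 := by
          intro h
          apply hyz
          rw [← h2, neg_eq_iff_add_eq_zero.mpr h]
        exact pair_main hsymm hSs (neg_eq_iff_add_eq_zero.mp h1) ha2 hy0 hx0
          hxy (fun h => hxz (h.trans h2)) hclos h2sc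
    · -- -x = y : pair {x, -x}, z must be an involution
      have hzinv : -z = z := by
        rcases hmem _ (hsymm z hzS) with h2 | h2 | h2
        · exfalso
          apply hyz
          rw [show z = -x from by rw [← h2, neg_neg], h1]
        · exfalso
          apply hxz
          have : z = -y := by rw [← h2, neg_neg]
          rw [this, ← h1, neg_neg]
        · exact h2
      have hSs : (S : Set G) = {x, -x, z} := by rw [hSset, h1]
      have ha2 : x + x ≠ 0 := by
        intro h
        apply hxy
        rw [← h1, neg_eq_iff_add_eq_zero.mpr h]
      exact pair_main hsymm hSs (neg_eq_iff_add_eq_zero.mp hzinv) ha2 hx0 hz0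
        hxz.symm (fun h => hyz.symm (h.trans h1.symm.symm)) hclos h2sc
    · -- -x = z : pair {x, -x}, y must be an involution
      have hyinv : -y = y := by
        rcases hmem _ (hsymm y hyS) with h2 | h2 | h2
        · exfalso
          apply hyz
          rw [show y = -x from by rw [← h2, neg_neg], h1]
        · exact h2
        · exfalso
          apply hxy
          have : y = -z := by rw [← h2, neg_neg]
          rw [this, ← h1, neg_neg]
      have hSs : (S : Set G) = {x, -x, y} := by
        rw [hSset, ← h1]
        ext w
        simp only [Set.mem_insert_iff, Set.mem_singleton_iff]
        tauto
      have ha2 : x + x ≠ 0 := by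
        intro h
        apply hxz
        rw [← h1, neg_eq_iff_add_eq_zero.mpr h]
      exact pair_main hsymm hSs (neg_eq_iff_add_eq_zero.mp hyinv) ha2 hx0 hy0
        hxy.symm (fun h => hyz (by rw [h, h1])) hclos h2sc
  · rintro (he | ⟨m, hm, he⟩)
    · obtain ⟨e⟩ := he
      exact spanningCyclable_of_iso e hyp3_sc
    · obtain ⟨e⟩ := he
      exact spanningCyclable_of_iso e (prism_sc hm)
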